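/- Let λ : C(X) → ℝ be a convex functional satisfying the Lipschitz condition with constant 1 (in sup norm), and let μ ∈ C*(X) satisfy inf_{φ}(λ(φ) − μ(φ)) > −∞. Then μ lies in the norm closure (in C*(X)) of the set of all subgradients of λ. -/

import Mathlib

open Filter Set Topology Pointwise Topology

lemma ekeland_weak {E : Type*} [NormedAddCommGroup E] [CompleteSpace E]
    (f : E → ℝ) (hf : Continuous f) (c : ℝ) (hc : ∀ x, c ≤ f x)
    {δ : ℝ} (hδ : 0 < δ) : ∃ x₀ : E, ∀ y, f x₀ ≤ f y + δ * ‖y - x₀‖ := by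
  classical
  set S : E → Set E := fun x => {y | f y + δ * ‖y - x‖ ≤ f x} with hS
  have hself : ∀ x, x ∈ S x := by intro x; simp [hS]
  have htrans : ∀ x y, y ∈ S x → S y ⊆ S x := by
    intro x y hy z hz
    simp only [hS, mem_setOf_eq] at *
    have ht : ‖z - x‖ ≤ ‖z - y‖ + ‖y - x‖ := norm_sub_le_norm_sub_add_norm_sub z y x
    nlinarith [norm_nonneg (z - y), norm_nonneg (y - x)]
  set i : E → ℝ := fun x => sInf (f '' S x) with hi
  have hibdd : ∀ x, BddBelow (f '' S x) := by
    intro x; exact ⟨c, by rintro a ⟨y, -, rfl⟩; exact hc y⟩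
  have hine : ∀ x, (f '' S x).Nonempty := fun x => ⟨f x, x, hself x, rfl⟩
  have hile : ∀ x y, y ∈ S x → i x ≤ f y := fun x y hy => csInf_le (hibdd x) ⟨y, hy, rfl⟩
  have hchoice : ∀ x, ∀ n : ℕ, ∃ y, y ∈ S x ∧ f y < i x + (1/2)^n := by
    intro x n
    obtain ⟨a, ⟨y, hy, rfl⟩, ha⟩ := Real.lt_sInf_add_pos (hine x) (by positivity : (0:ℝ) < (1/2)^n)
    exact ⟨y, hy, ha⟩
  choose T hT1 hT2 using hchoice
  obtain ⟨u, hu0, huS⟩ : ∃ u : ℕ → E, u 0 = 0 ∧ ∀ n, u (n+1) = T (u n) n :=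
    ⟨fun n => Nat.rec (0:E) (fun k ih => T ih k) n, rfl, fun n => rfl⟩
  have h1 : ∀ n, u (n+1) ∈ S (u n) := fun n => (huS n) ▸ hT1 (u n) n
  have h2 : ∀ n, f (u (n+1)) < i (u n) + (1/2)^n := fun n => (huS n) ▸ hT2 (u n) n
  have hmem : ∀ n m, n ≤ m → u m ∈ S (u n) := by
    intro n m hnm
    induction m, hnm using Nat.le_induction with
    | base => exact hself _
    | succ m hm ih => exact htrans _ _ ih (h1 m)
  have hanti : Antitone (fun n => f (u n)) := by
    apply antitone_nat_of_succ_le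
    intro n
    have := h1 n
    simp only [hS, mem_setOf_eq] at this
    nlinarith [norm_nonneg (u (n+1) - u n)]
  have hbddb : BddBelow (range fun n => f (u n)) := ⟨c, by rintro a ⟨n, rfl⟩; exact hc _⟩
  set l : ℝ := ⨅ n, f (u n) with hl
  have hlt : Tendsto (fun n => f (u n)) atTop (𝓝 l) := tendsto_atTop_ciInf hanti hbddb
  have hlle : ∀ n, l ≤ f (u n) := fun n => ciInf_le hbddb n
  have hcau : CauchySeq u := by
    refine cauchySeq_of_le_tendsto_0 (fun N => (f (u N) - l) / δ) ?_ ?_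
    case _ =>
      intro n m N hNn hNm
      wlog hnm : n ≤ m generalizing n m
      · rw [dist_comm]; exact this m n hNm hNn (le_of_not_ge hnm)
      have hS2 := hmem n m hnm
      simp only [hS, mem_setOf_eq] at hS2
      rw [dist_eq_norm, le_div_iff₀ hδ]
      calc ‖u n - u m‖ * δ = δ * ‖u m - u n‖ := by rw [norm_sub_rev]; ring
        _ ≤ f (u n) - f (u m) := by linarith [hS2]
        _ ≤ f (u N) - l := by
            have := hanti hNn; have := hlle m; linarith
    case _ =>
      have : Tendsto (fun N => f (u N) - l) atTop (𝓝 (l - l)) := hlt.sub tendsto_const_nhds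
      simpa using this.div_const δ
  obtain ⟨xb, hxb⟩ := cauchySeq_tendsto_of_complete hcau
  have hxbS : ∀ n, xb ∈ S (u n) := by
    intro n
    have hcl : IsClosed (S (u n)) := by
      apply isClosed_le
      · exact hf.add (continuous_const.mul ((continuous_id.sub continuous_const).norm))
      · exact continuous_const
    exact hcl.mem_of_tendsto hxb (eventually_atTop.2 ⟨n, fun m hm => hmem n m hm⟩)
  have hfxb : Tendsto (fun n => f (u n)) atTop (𝓝 (f xb)) :=
    (hf.tendsto xb).comp hxb
  have hlxb : l = f xb := tendsto_nhds_unique hlt hfxb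
  refine ⟨xb, fun y => ?_⟩
  by_contra hcon
  push_neg at hcon
  have hymem : ∀ n, y ∈ S (u n) := by
    intro n
    have hx := hxbS n
    simp only [hS, mem_setOf_eq] at hx ⊢
    have ht : ‖y - u n‖ ≤ ‖y - xb‖ + ‖xb - u n‖ := norm_sub_le_norm_sub_add_norm_sub y xb (u n)
    nlinarith
  have hfy : ∀ n, f (u (n+1)) < f y + (1/2)^n := fun n =>
    lt_of_lt_of_le (h2 n) (by linarith [hile (u n) y (hymem n)])
  have : l ≤ f y := by
    have h1' : Tendsto (fun n => f (u (n+1))) atTop (𝓝 l) := hlt.comp (tendsto_add_atTop_nat 1)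
    have h2' : Tendsto (fun n : ℕ => f y + (1/2)^n) atTop (𝓝 (f y + 0)) :=
      tendsto_const_nhds.add (tendsto_pow_atTop_nhds_zero_of_lt_one (by norm_num) (by norm_num))
    have := le_of_tendsto_of_tendsto h1' h2' (Eventually.of_forall fun n => (hfy n).le)
    simpa using this
  rw [hlxb] at this
  nlinarith [norm_nonneg (y - xb)]


section
variable {E : Type*} [NormedAddCommGroup E] [NormedSpace ℝ E]

lemma infconv (p : E → ℝ) (hp0 : p 0 = 0)
    (hpc : ∀ x y : E, ∀ a b : ℝ, 0 ≤ a → 0 ≤ b → a + b = 1 →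
      p (a • x + b • y) ≤ a * p x + b * p y)
    {δ : ℝ} (hδ : 0 < δ) (hlow : ∀ x, -(δ * ‖x‖) ≤ p x) :
    ∃ r : E → ℝ, (∀ x, r x ≤ p x) ∧ (∀ x, r x ≤ δ * ‖x‖) ∧ (∀ x, -(δ * ‖x‖) ≤ r x) ∧
      (∀ x y : E, ∀ a b : ℝ, 0 ≤ a → 0 ≤ b → a + b = 1 →
        r (a • x + b • y) ≤ a * r x + b * r y) := by
  classical
  set A : E → Set ℝ := fun x => (fun a => p a + δ * ‖x - a‖) '' univ with hA
  have hAne : ∀ x, (A x).Nonempty := fun x => ⟨p x + δ * ‖x - x‖, x, mem_univ x, rfl⟩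
  have hkey : ∀ x : E, ∀ a : E, -(δ * ‖x‖) ≤ p a + δ * ‖x - a‖ := by
    intro x a
    have h1 : ‖a‖ ≤ ‖x‖ + ‖x - a‖ := by
      calc ‖a‖ = ‖x - (x - a)‖ := by congr 1; abel
        _ ≤ ‖x‖ + ‖x - a‖ := norm_sub_le _ _
    have := hlow a
    nlinarith
  have hAbdd : ∀ x, BddBelow (A x) := by
    intro x; exact ⟨-(δ * ‖x‖), by rintro v ⟨a, -, rfl⟩; exact hkey x a⟩
  set r : E → ℝ := fun x => sInf (A x) with hr
  have hrle : ∀ (x a : E), r x ≤ p a + δ * ‖x - a‖ := fun x a =>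
    csInf_le (hAbdd x) ⟨a, mem_univ a, rfl⟩
  refine ⟨r, fun x => ?_, fun x => ?_, fun x => le_csInf (hAne x) (by rintro v ⟨a, -, rfl⟩; exact hkey x a), ?_⟩
  · simpa using hrle x x
  · have := hrle x 0; simpa [hp0] using this
  · intro x y a b ha hb hab
    refine le_of_forall_pos_le_add fun ε hε => ?_
    obtain ⟨v, ⟨u, -, rfl⟩, hu⟩ := Real.lt_sInf_add_pos (hAne x) hε
    obtain ⟨w, ⟨v', -, rfl⟩, hv⟩ := Real.lt_sInf_add_pos (hAne y) hε
    have hcomb : r (a • x + b • y) ≤ p (a • u + b • v') + δ * ‖(a • x + b • y) - (a • u + b • v')‖ :=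
      hrle _ _
    have hnrm : ‖(a • x + b • y) - (a • u + b • v')‖ ≤ a * ‖x - u‖ + b * ‖y - v'‖ := by
      have : (a • x + b • y) - (a • u + b • v') = a • (x - u) + b • (y - v') := by
        module
      rw [this]
      calc ‖a • (x - u) + b • (y - v')‖ ≤ ‖a • (x - u)‖ + ‖b • (y - v')‖ := norm_add_le _ _
        _ = a * ‖x - u‖ + b * ‖y - v'‖ := by
            rw [norm_smul, norm_smul, Real.norm_eq_abs, Real.norm_eq_abs,
              abs_of_nonneg ha, abs_of_nonneg hb]
    have hpc' := hpc u v' a b ha hb hab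
    have hu' : p u + δ * ‖x - u‖ < r x + ε := hu
    have hv' : p v' + δ * ‖y - v'‖ < r y + ε := hv
    have h1 : a * (p u + δ * ‖x - u‖) ≤ a * (r x + ε) := mul_le_mul_of_nonneg_left hu'.le ha
    have h2 : b * (p v' + δ * ‖y - v'‖) ≤ b * (r y + ε) := mul_le_mul_of_nonneg_left hv'.le hb
    have h3 : δ * ‖(a • x + b • y) - (a • u + b • v')‖ ≤ δ * (a * ‖x - u‖ + b * ‖y - v'‖) :=
      mul_le_mul_of_nonneg_left hnrm hδ.le
    have hε' : a * ε + b * ε = ε := by rw [← add_mul, hab, one_mul]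
    nlinarith [h1, h2, h3, hcomb, hpc', hε']

lemma homog (r : E → ℝ)
    (hrc : ∀ x y : E, ∀ a b : ℝ, 0 ≤ a → 0 ≤ b → a + b = 1 →
      r (a • x + b • y) ≤ a * r x + b * r y)
    {δ : ℝ} (hδ : 0 < δ) (hlow : ∀ x, -(δ * ‖x‖) ≤ r x) :
    ∃ N : E → ℝ, (∀ x, N x ≤ r x) ∧ (∀ x, -(δ * ‖x‖) ≤ N x) ∧
      (∀ c : ℝ, 0 < c → ∀ x, N (c • x) = c * N x) ∧
      (∀ x y : E, N (x + y) ≤ N x + N y) := by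
  classical
  set B : E → Set ℝ := fun x => (fun t => r (t • x) / t) '' Ioi (0:ℝ) with hB
  have hBne : ∀ x, (B x).Nonempty := fun x => ⟨r ((1:ℝ) • x) / 1, 1, by norm_num⟩
  have hkey : ∀ (x : E), ∀ t : ℝ, 0 < t → -(δ * ‖x‖) ≤ r (t • x) / t := by
    intro x t ht
    rw [le_div_iff₀ ht]
    have := hlow (t • x)
    rw [norm_smul, Real.norm_eq_abs, abs_of_pos ht] at this
    nlinarith
  have hBbdd : ∀ x, BddBelow (B x) := fun x =>
    ⟨-(δ * ‖x‖), by rintro v ⟨t, ht, rfl⟩; exact hkey x t ht⟩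
  set N : E → ℝ := fun x => sInf (B x) with hN
  have hNle : ∀ (x : E), ∀ t : ℝ, 0 < t → N x ≤ r (t • x) / t := fun x t ht =>
    csInf_le (hBbdd x) ⟨t, ht, rfl⟩
  refine ⟨N, fun x => by simpa using hNle x 1 one_pos,
    fun x => le_csInf (hBne x) (by rintro v ⟨t, ht, rfl⟩; exact hkey x t ht), ?_, ?_⟩
  · -- positive homogeneity
    intro c hc x
    have himg : B (c • x) = (fun v => c * v) '' B x := by
      ext v
      constructor
      · rintro ⟨t, ht, rfl⟩
        refine ⟨r ((t * c) • x) / (t * c), ⟨t * c, mul_pos ht hc, rfl⟩, ?_⟩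
        have ht' : (0:ℝ) < t := ht
        simp only [smul_smul]
        field_simp
      · rintro ⟨w, ⟨t, ht, rfl⟩, rfl⟩
        refine ⟨t / c, div_pos ht hc, ?_⟩
        have ht' : (0:ℝ) < t := ht
        simp only [smul_smul, div_mul_cancel₀ _ (ne_of_gt hc)]
        field_simp
    have himg2 : (fun v => c * v) '' B x = c • B x := by
      ext v
      simp [Set.mem_smul_set, eq_comm, smul_eq_mul]
    have : sInf ((fun v => c * v) '' B x) = c * sInf (B x) := by
      rw [himg2, Real.sInf_smul_of_nonneg hc.le, smul_eq_mul]
    rw [show N (c • x) = sInf (B (c • x)) from rfl, himg, this]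
  · -- subadditivity
    intro x y
    refine le_of_forall_pos_le_add fun ε hε => ?_
    obtain ⟨v, ⟨s, hs, rfl⟩, hsv⟩ := Real.lt_sInf_add_pos (hBne x) (half_pos hε)
    obtain ⟨w, ⟨t, ht, rfl⟩, htw⟩ := Real.lt_sInf_add_pos (hBne y) (half_pos hε)
    simp only at hsv htw
    have hs' : (0:ℝ) < s := hs
    have ht' : (0:ℝ) < t := ht
    have hst : (0:ℝ) < s + t := by linarith
    set ρ : ℝ := s * t / (s + t) with hρ
    have hρpos : 0 < ρ := by positivity
    have e1 : t / (s + t) * s = ρ := by rw [hρ, div_mul_eq_mul_div, mul_comm]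
    have e2 : s / (s + t) * t = ρ := by rw [hρ, div_mul_eq_mul_div]
    have hcomb : ρ • (x + y) = (t / (s + t)) • (s • x) + (s / (s + t)) • (t • y) := by
      rw [smul_add, smul_smul, smul_smul, e1, e2]
    have hconv := hrc (s • x) (t • y) (t / (s + t)) (s / (s + t))
      (by positivity) (by positivity) (by rw [← add_div, add_comm, div_self hst.ne'])
    rw [← hcomb] at hconv
    have hNρ : N (x + y) ≤ r (ρ • (x + y)) / ρ := hNle _ ρ hρpos
    have hsplit : r (ρ • (x + y)) / ρ ≤ r (s • x) / s + r (t • y) / t := by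
      rw [div_le_iff₀ hρpos]
      calc r (ρ • (x + y)) ≤ (t / (s + t)) * r (s • x) + (s / (s + t)) * r (t • y) := hconv
        _ = (r (s • x) / s + r (t • y) / t) * ρ := by
            rw [hρ]
            first
            | (field_simp; ring)
            | field_simp
    have hfin := hNρ.trans hsplit
    have hsv' : r (s • x) / s < N x + ε / 2 := hsv
    have htw' : r (t • y) / t < N y + ε / 2 := htw
    linarith

end

theorem stmt_3 {X : Type*} [TopologicalSpace X] [CompactSpace X] [T2Space X]
    (lam : C(X, ℝ) → ℝ)
    (hconv : ConvexOn ℝ Set.univ lam)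
    (hlip : ∀ φ ψ : C(X, ℝ), |lam φ - lam ψ| ≤ ‖φ - ψ‖)
    (μ : C(X, ℝ) →L[ℝ] ℝ)
    (hbdd : ∃ c : ℝ, ∀ φ : C(X, ℝ), c ≤ lam φ - μ φ) :
    μ ∈ closure {m : C(X, ℝ) →L[ℝ] ℝ |
      ∃ φ : C(X, ℝ), ∀ ψ : C(X, ℝ), m ψ ≤ lam (φ + ψ) - lam φ} := by
  classical
  obtain ⟨c, hc⟩ := hbdd
  set S : Set (C(X, ℝ) →L[ℝ] ℝ) :=
    {m : C(X, ℝ) →L[ℝ] ℝ | ∃ φ : C(X, ℝ), ∀ ψ : C(X, ℝ), m ψ ≤ lam (φ + ψ) - lam φ} with hSdef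
  show μ ∈ closure S
  have hcl : (∀ ε > 0, ∃ m ∈ S, dist μ m < ε) → μ ∈ closure S := Metric.mem_closure_iff.2
  refine hcl fun ε hε => ?_
  set δ : ℝ := ε / 2 with hδdef
  have hδ : 0 < δ := by positivity
  have hlamlip : LipschitzWith 1 lam := by
    apply LipschitzWith.of_dist_le_mul
    intro φ ψ
    rw [Real.dist_eq, dist_eq_norm]
    simpa using hlip φ ψ
  set f : C(X, ℝ) → ℝ := fun φ => lam φ - μ φ with hfdef
  have hfc : Continuous f := hlamlip.continuous.sub μ.continuous
  obtain ⟨x₀, hx₀⟩ := ekeland_weak f hfc c hc hδ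
  set p : C(X, ℝ) → ℝ := fun ψ => lam (x₀ + ψ) - lam x₀ - μ ψ with hpdef
  have hp0 : p 0 = 0 := by simp [hpdef]
  have hpc : ∀ x y : C(X, ℝ), ∀ a b : ℝ, 0 ≤ a → 0 ≤ b → a + b = 1 →
      p (a • x + b • y) ≤ a * p x + b * p y := by
    intro x y a b ha hb hab
    have hxy : x₀ + (a • x + b • y) = a • (x₀ + x) + b • (x₀ + y) := by
      calc x₀ + (a • x + b • y) = (a • x₀ + b • x₀) + (a • x + b • y) := by
            rw [← add_smul, hab, one_smul]
        _ = a • (x₀ + x) + b • (x₀ + y) := by rw [smul_add, smul_add]; abel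
    have hcv := hconv.2 (mem_univ (x₀ + x)) (mem_univ (x₀ + y)) ha hb hab
    rw [smul_eq_mul, smul_eq_mul] at hcv
    have hlamid : a * lam x₀ + b * lam x₀ = lam x₀ := by rw [← add_mul, hab, one_mul]
    simp only [hpdef, hxy, map_add, map_smul, smul_eq_mul]
    linarith
  have hplow : ∀ ψ, -(δ * ‖ψ‖) ≤ p ψ := by
    intro ψ
    have h := hx₀ (x₀ + ψ)
    simp only [hfdef, map_add, add_sub_cancel_left] at h
    simp only [hpdef]
    linarith
  obtain ⟨r, hr1, hr2, hr3, hr4⟩ := infconv p hp0 hpc hδ hplow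
  obtain ⟨N, hN1, hN2, hN3, hN4⟩ := homog r hr4 hδ hr3
  obtain ⟨g, hg1, hg2⟩ := exists_extension_of_le_sublinear
      ((0 : C(X, ℝ) →ₗ[ℝ] ℝ).toPMap ⊥) N (fun c hc x => hN3 c hc x) hN4 (by
        rintro ⟨x, hx⟩
        have hx0 : x = 0 := (Submodule.mem_bot ℝ).1 hx
        subst hx0
        simp only [LinearMap.toPMap_apply, LinearMap.zero_apply]
        have := hN2 0
        simpa using this)
  have hgb : ∀ ψ, ‖g ψ‖ ≤ δ * ‖ψ‖ := by
    intro ψ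
    rw [Real.norm_eq_abs, abs_le]
    constructor
    · have h1 : g (-ψ) ≤ N (-ψ) := hg2 (-ψ)
      have h2 : N (-ψ) ≤ r (-ψ) := hN1 (-ψ)
      have h3 : r (-ψ) ≤ δ * ‖-ψ‖ := hr2 (-ψ)
      rw [map_neg, norm_neg] at *
      linarith
    · exact (hg2 ψ).trans ((hN1 ψ).trans (hr2 ψ))
  set G : C(X, ℝ) →L[ℝ] ℝ := g.mkContinuous δ hgb with hGdef
  have hGapp : ∀ ψ, G ψ = g ψ := fun ψ => rfl
  refine ⟨μ + G, ⟨x₀, fun ψ => ?_⟩, ?_⟩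
  · have h1 : g ψ ≤ p ψ := (hg2 ψ).trans ((hN1 ψ).trans (hr1 ψ))
    simp only [hpdef] at h1
    simp only [ContinuousLinearMap.add_apply, hGapp]
    linarith
  · have hGn : ‖G‖ ≤ δ := g.mkContinuous_norm_le hδ.le hgb
    have hdist : dist μ (μ + G) = ‖μ - (μ + G)‖ := dist_eq_norm μ (μ + G)
    rw [hdist]
    have h2 : μ - (μ + G) = -G := by rw [sub_add_eq_sub_sub, sub_self, zero_sub]
    have h3 : ‖(-G : C(X, ℝ) →L[ℝ] ℝ)‖ = ‖G‖ := norm_neg G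
    rw [h2, h3]
    calc ‖G‖ ≤ δ := hGn
      _ < ε := by rw [hδdef]; linarith
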